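/- Let (X, d, μ) be a complete separable metric space equipped with a fully supported Borel probability measure, and let F ⊆ Lip₁(X, ℝ). Let F̄ denote the closure of F in the topology of convergence in measure. Then for any f ∈ F̄ and r ∈ (0, 1), the set F̄ ∩ { g : d_KF(f, g) ≤ r } is compact in the topology of convergence in measure. In particular, (F̄, d_KF) is complete. -/

import Mathlib

open MeasureTheory Set Filter
open scoped ENNReal Topology

/-- The Ky Fan (extended) distance between two maps into a pseudo-emetric space. -/
noncomputable def eKyFan {X Y : Type*} [MeasurableSpace X] [PseudoEMetricSpace Y]
    (μ : Measure X) (f g : X → Y) : ℝ≥0∞ :=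
  sInf {ε : ℝ≥0∞ | μ {x | ε < edist (f x) (g x)} ≤ ε}

/-- The closure of a family of functions in the topology of convergence in
measure (equivalently, with respect to the Ky Fan metric). -/
def closKF {X : Type*} [MeasurableSpace X] (μ : Measure X)
    (F : Set (X → ℝ)) : Set (X → ℝ) :=
  {g | ∀ ε : ℝ≥0∞, 0 < ε → ∃ f ∈ F, eKyFan μ f g < ε}

section KyFanLemmas

variable {X : Type*} {Y : Type*} [MeasurableSpace X] [PseudoEMetricSpace Y] {μ : Measure X}

lemma eKyFan_le {f g : X → Y} {ε : ℝ≥0∞} (h : μ {x | ε < edist (f x) (g x)} ≤ ε) :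
    eKyFan μ f g ≤ ε := sInf_le h

lemma mem_S_mono {f g : X → Y} {a b : ℝ≥0∞} (hab : a ≤ b)
    (h : μ {x | a < edist (f x) (g x)} ≤ a) : μ {x | b < edist (f x) (g x)} ≤ b :=
  le_trans (le_trans (measure_mono fun x hx => lt_of_le_of_lt hab hx) h) hab

lemma measure_le_of_eKyFan_lt {f g : X → Y} {ε : ℝ≥0∞} (h : eKyFan μ f g < ε) :
    μ {x | ε < edist (f x) (g x)} ≤ ε := by
  obtain ⟨a, ha, haε⟩ := sInf_lt_iff.mp h
  exact mem_S_mono haε.le ha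

lemma eKyFan_comm (f g : X → Y) : eKyFan μ f g = eKyFan μ g f := by
  unfold eKyFan; congr 1; ext ε; simp [edist_comm]

lemma eKyFan_congr_right {f g g' : X → Y} (h : g =ᵐ[μ] g') :
    eKyFan μ f g = eKyFan μ f g' := by
  unfold eKyFan; congr 1; ext ε
  have : {x | ε < edist (f x) (g x)} =ᵐ[μ] {x | ε < edist (f x) (g' x)} := by
    filter_upwards [h] with x hx
    show (ε < edist (f x) (g x)) = (ε < edist (f x) (g' x))
    rw [hx]
  simp [measure_congr this]

lemma eKyFan_congr_left {f f' g : X → Y} (h : f =ᵐ[μ] f') :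
    eKyFan μ f g = eKyFan μ f' g := by
  rw [eKyFan_comm, eKyFan_congr_right h, eKyFan_comm]

lemma eKyFan_triangle (f g h : X → Y) :
    eKyFan μ f h ≤ eKyFan μ f g + eKyFan μ g h := by
  have key : ∀ a ∈ {ε : ℝ≥0∞ | μ {x | ε < edist (f x) (g x)} ≤ ε},
      ∀ b ∈ {ε : ℝ≥0∞ | μ {x | ε < edist (g x) (h x)} ≤ ε},
      eKyFan μ f h ≤ a + b := by
    intro a ha b hb
    apply eKyFan_le
    have hsub : {x | a + b < edist (f x) (h x)} ⊆
        {x | a < edist (f x) (g x)} ∪ {x | b < edist (g x) (h x)} := by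
      intro x hx
      by_contra hc
      rw [mem_union] at hc
      push_neg at hc
      simp only [mem_setOf_eq, not_lt] at hc hx
      exact absurd (le_trans (edist_triangle (f x) (g x) (h x)) (add_le_add hc.1 hc.2))
        (not_le.mpr hx)
    calc μ {x | a + b < edist (f x) (h x)} ≤ _ := measure_mono hsub
      _ ≤ μ {x | a < edist (f x) (g x)} + μ {x | b < edist (g x) (h x)} := measure_union_le _ _
      _ ≤ a + b := add_le_add ha hb
  have hne1 : ({ε : ℝ≥0∞ | μ {x | ε < edist (f x) (g x)} ≤ ε}).Nonempty := ⟨⊤, by simp⟩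
  have hne2 : ({ε : ℝ≥0∞ | μ {x | ε < edist (g x) (h x)} ≤ ε}).Nonempty := ⟨⊤, by simp⟩
  haveI := hne1.to_subtype; haveI := hne2.to_subtype
  show eKyFan μ f h ≤ sInf _ + sInf _
  rw [sInf_eq_iInf', sInf_eq_iInf', ENNReal.iInf_add]
  refine le_iInf fun a => ?_
  rw [ENNReal.add_iInf]
  exact le_iInf fun b => key a a.2 b b.2

lemma ennreal_half_add {a b ε : ℝ≥0∞} (ha : a < ε / 2) (hb : b < ε / 2) : a + b < ε := by
  rcases eq_or_ne ε ⊤ with rfl | hε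
  · exact ENNReal.add_lt_top.mpr ⟨lt_top_of_lt ha, lt_top_of_lt hb⟩
  · have h2 : ε / 2 ≠ ⊤ := ne_top_of_le_ne_top hε ENNReal.half_le_self
    calc a + b < ε / 2 + ε / 2 := ENNReal.add_lt_add ha hb
      _ = ε := ENNReal.add_halves ε

end KyFanLemmas

section MetricLemmas

variable {X : Type*} [MetricSpace X] [MeasurableSpace X] {μ : Measure X}

lemma tendsto_eKyFan_zero_of_tendstoInMeasure (h : ℕ → X → ℝ) (H : X → ℝ)
    (hm : TendstoInMeasure μ h atTop H) :
    Tendsto (fun n => eKyFan μ (h n) H) atTop (𝓝 0) := by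
  rw [ENNReal.tendsto_nhds_zero]
  intro ε hε
  set δ := min ε 1 with hδdef
  have hδpos : 0 < δ := lt_min hε zero_lt_one
  have hδtop : δ ≠ ⊤ := ne_top_of_le_ne_top ENNReal.one_ne_top (min_le_right _ _)
  have hhalfpos : 0 < δ / 2 := ENNReal.div_pos hδpos.ne' ENNReal.ofNat_ne_top
  have hhalftop : δ / 2 ≠ ⊤ :=
    ne_top_of_le_ne_top hδtop ENNReal.half_le_self
  set a := (δ / 2).toReal with ha
  have hapos : 0 < a := ENNReal.toReal_pos hhalfpos.ne' hhalftop
  have hmain := tendstoInMeasure_iff_dist.mp hm a hapos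
  have hev : ∀ᶠ n in atTop, μ {x | a ≤ dist (h n x) (H x)} ≤ δ / 2 :=
    hmain.eventually (eventually_le_nhds hhalfpos)
  filter_upwards [hev] with n hn
  have hsub : {x | δ / 2 < edist (h n x) (H x)} ⊆ {x | a ≤ dist (h n x) (H x)} := by
    intro x hx
    simp only [mem_setOf_eq] at hx ⊢
    by_contra hc
    push_neg at hc
    have : edist (h n x) (H x) ≤ δ / 2 := by
      rw [edist_dist]
      calc ENNReal.ofReal (dist (h n x) (H x)) ≤ ENNReal.ofReal a :=
        ENNReal.ofReal_le_ofReal hc.le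
      _ = δ / 2 := ENNReal.ofReal_toReal hhalftop
    exact absurd this (not_le.mpr hx)
  have : eKyFan μ (h n) H ≤ δ / 2 := sInf_le (le_trans (measure_mono hsub) hn)
  calc eKyFan μ (h n) H ≤ δ / 2 := this
    _ ≤ δ := ENNReal.half_le_self
    _ ≤ ε := min_le_left _ _

lemma dense_of_full (hsupp : ∀ U : Set X, IsOpen U → U.Nonempty → 0 < μ U) (D : Set X)
    (hD : μ Dᶜ = 0) : Dense D := by
  rw [dense_iff_inter_open]
  intro U hU hUne
  by_contra hc
  rw [not_nonempty_iff_eq_empty] at hc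
  have : U ⊆ Dᶜ := fun x hx => fun hxD => (eq_empty_iff_forall_notMem.mp hc x) ⟨hx, hxD⟩
  exact absurd (le_trans (measure_mono this) hD.le) (not_le.mpr (hsupp U hU hUne))

lemma lip_lim [CompleteSpace X]
    (h : ℕ → X → ℝ) (hl : ∀ n, LipschitzWith 1 (h n)) (D : Set X) (hD : Dense D)
    (hconv : ∀ x ∈ D, ∃ L : ℝ, Tendsto (fun n => h n x) atTop (𝓝 L)) :
    ∃ H : X → ℝ, LipschitzWith 1 H ∧ ∀ x, Tendsto (fun n => h n x) atTop (𝓝 (H x)) := by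
  have hcauchy : ∀ x : X, CauchySeq fun n => h n x := by
    intro x
    rw [Metric.cauchySeq_iff]
    intro ε hε
    obtain ⟨y, hyD, hxy⟩ := hD.exists_dist_lt x (show (0:ℝ) < ε/4 by linarith)
    obtain ⟨L, hL⟩ := hconv y hyD
    obtain ⟨N, hN⟩ := Metric.cauchySeq_iff.mp hL.cauchySeq (ε/4) (by linarith)
    refine ⟨N, fun m hm n hn => ?_⟩
    have h1 : dist (h m x) (h m y) ≤ dist x y := by
      simpa using (hl m).dist_le_mul x y
    have h2 : dist (h n y) (h n x) ≤ dist x y := by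
      simpa [dist_comm] using (hl n).dist_le_mul y x
    calc dist (h m x) (h n x) ≤ dist (h m x) (h m y) + dist (h m y) (h n y) +
          dist (h n y) (h n x) := dist_triangle4 _ _ _ _
      _ < ε/4 + ε/4 + ε/4 := by
          have := hN m hm n hn
          gcongr <;> linarith
      _ < ε := by linarith
  choose H hH using fun x => cauchySeq_tendsto_of_complete (hcauchy x)
  refine ⟨H, ?_, hH⟩
  have hd : ∀ x y, dist (H x) (H y) ≤ dist x y := by
    intro x y
    have : Tendsto (fun n => dist (h n x) (h n y)) atTop (𝓝 (dist (H x) (H y))) :=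
      (hH x).dist (hH y)
    exact le_of_tendsto this (Eventually.of_forall fun n => by
      simpa using (hl n).dist_le_mul x y)
  exact LipschitzWith.of_dist_le_mul fun x y => by simpa using hd x y

/-- Every element of the Ky Fan closure of a family of 1-Lipschitz functions has
a 1-Lipschitz representative. -/
lemma exists_lip_rep [CompleteSpace X]
    (hsupp : ∀ U : Set X, IsOpen U → U.Nonempty → 0 < μ U)
    (F : Set (X → ℝ)) (hF : ∀ f ∈ F, LipschitzWith 1 f)
    (g : X → ℝ) (hg : g ∈ closKF μ F) :
    ∃ h : X → ℝ, LipschitzWith 1 h ∧ g =ᵐ[μ] h := by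
  have hex : ∀ n : ℕ, ∃ f ∈ F, eKyFan μ f g < (1/2 : ℝ≥0∞) ^ (n+1) := by
    intro n
    exact hg _ (ENNReal.pow_pos (by norm_num) _)
  choose v hvF hv using hex
  set s : ℕ → Set X := fun n => {x | (1/2 : ℝ≥0∞) ^ (n+1) < edist (v n x) (g x)} with hs
  have hμs : ∀ n, μ (s n) ≤ (1/2 : ℝ≥0∞) ^ (n+1) := fun n => measure_le_of_eKyFan_lt (hv n)
  have hsum : ∑' n, μ (s n) ≠ ⊤ := by
    refine ne_top_of_le_ne_top ?_ (ENNReal.tsum_le_tsum hμs)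
    have h1 : ∑' n:ℕ, (1/2:ℝ≥0∞)^(n+1) ≤ ∑' n:ℕ, (1/2:ℝ≥0∞)^n :=
      ENNReal.tsum_le_tsum fun n => pow_le_pow_of_le_one zero_le (by norm_num) (by omega)
    refine ne_top_of_le_ne_top ?_ h1
    rw [ENNReal.tsum_geometric]
    simp [one_div, ENNReal.one_sub_inv_two]
  have hae := MeasureTheory.ae_eventually_notMem hsum
  have hconv : ∀ᵐ x ∂μ, Tendsto (fun n => v n x) atTop (𝓝 (g x)) := by
    filter_upwards [hae] with x hx
    rw [EMetric.tendsto_atTop]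
    intro ε hε
    obtain ⟨N₁, hN₁⟩ := eventually_atTop.mp hx
    obtain ⟨N₂, hN₂⟩ := eventually_atTop.mp
      ((ENNReal.tendsto_pow_atTop_nhds_zero_of_lt_one (by norm_num : (1/2:ℝ≥0∞) < 1)).eventually
        (eventually_lt_nhds hε))
    refine ⟨max N₁ N₂, fun n hn => ?_⟩
    have h1 : x ∉ s n := hN₁ n (le_trans (le_max_left _ _) hn)
    simp only [hs, mem_setOf_eq, not_lt] at h1
    calc edist (v n x) (g x) ≤ (1/2 : ℝ≥0∞) ^ (n+1) := h1
      _ ≤ (1/2 : ℝ≥0∞) ^ n := pow_le_pow_of_le_one zero_le (by norm_num) (by omega)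
      _ < ε := hN₂ n (le_trans (le_max_right _ _) hn)
  set D := {x | Tendsto (fun n => v n x) atTop (𝓝 (g x))} with hD
  have hDfull : μ Dᶜ = 0 := hconv
  have hDdense : Dense D := dense_of_full hsupp D hDfull
  obtain ⟨H, hHlip, hHconv⟩ := lip_lim v (fun n => hF _ (hvF n)) D hDdense
    (fun x hx => ⟨g x, hx⟩)
  refine ⟨H, hHlip, ?_⟩
  filter_upwards [hconv] with x hx
  exact tendsto_nhds_unique hx (hHconv x)

/-- Arzelà–Ascoli-type lemma: a sequence of 1-Lipschitz functions bounded at one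
point admits a pointwise (everywhere) convergent subsequence with 1-Lipschitz limit. -/
lemma arzela [CompleteSpace X] [TopologicalSpace.SeparableSpace X] [Nonempty X]
    (h : ℕ → X → ℝ) (hl : ∀ n, LipschitzWith 1 (h n)) (x₀ : X) (C : ℝ)
    (hbd : ∀ n, |h n x₀| ≤ C) :
    ∃ φ : ℕ → ℕ, StrictMono φ ∧ ∃ H : X → ℝ, LipschitzWith 1 H ∧
      ∀ x, Tendsto (fun n => h (φ n) x) atTop (𝓝 (H x)) := by
  set u := TopologicalSpace.denseSeq X with hu
  set B : ℕ → ℝ := fun k => C + dist (u k) x₀ with hB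
  set K : Set (ℕ → ℝ) := Set.pi univ fun k => Icc (-(B k)) (B k) with hK
  have hKcomp : IsCompact K := isCompact_univ_pi fun k => isCompact_Icc
  have hmem : ∀ n, (fun k => h n (u k)) ∈ K := by
    intro n
    rw [hK, Set.mem_univ_pi]
    intro k
    rw [Set.mem_Icc, ← abs_le]
    calc |h n (u k)| ≤ |h n (u k) - h n x₀| + |h n x₀| := by
          nlinarith [abs_nonneg (h n (u k) - h n x₀), abs_nonneg (h n x₀),
            abs_sub_abs_le_abs_sub (h n (u k)) (h n x₀)]
      _ ≤ dist (u k) x₀ + C := by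
          have h1 : |h n (u k) - h n x₀| ≤ dist (u k) x₀ := by
            have := (hl n).dist_le_mul (u k) x₀
            simpa [Real.dist_eq] using this
          linarith [hbd n]
      _ = B k := by rw [hB]; ring
  obtain ⟨L, hLK, φ, hφ, hconv⟩ := hKcomp.isSeqCompact hmem
  have hcoord : ∀ k, Tendsto (fun n => h (φ n) (u k)) atTop (𝓝 (L k)) :=
    tendsto_pi_nhds.mp hconv
  obtain ⟨H, hHlip, hH⟩ := lip_lim (fun n => h (φ n)) (fun n => hl _)
    (Set.range u) (TopologicalSpace.denseRange_denseSeq X)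
    (by rintro x ⟨k, rfl⟩; exact ⟨L k, hcoord k⟩)
  exact ⟨φ, hφ, H, hHlip, hH⟩

lemma exists_pt_near (f h : X → ℝ) (c : ℝ≥0∞) (hc : μ {x | c < edist (f x) (h x)} ≤ c)
    (B : Set X) (hcB : c < μ B) : ∃ x ∈ B, edist (f x) (h x) ≤ c := by
  by_contra hcon
  push_neg at hcon
  have : B ⊆ {x | c < edist (f x) (h x)} := fun x hx => hcon x hx
  exact absurd (le_trans (measure_mono this) hc) (not_le.mpr hcB)

lemma exists_big_ball [IsProbabilityMeasure μ] (x₀ : X) (c : ℝ≥0∞) (hc : c < 1) :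
    ∃ R : ℝ, 0 < R ∧ c < μ (Metric.ball x₀ R) := by
  have hmono : Monotone fun n : ℕ => Metric.ball x₀ (n : ℝ) := fun m n hmn =>
    Metric.ball_subset_ball (by exact_mod_cast hmn)
  have hlim := MeasureTheory.tendsto_measure_iUnion_atTop (μ := μ) hmono
  rw [Metric.iUnion_ball_nat, measure_univ] at hlim
  obtain ⟨n, hn⟩ := (hlim.eventually (eventually_gt_nhds hc)).exists
  exact ⟨n + 1, by positivity,
    lt_of_lt_of_le hn (measure_mono (Metric.ball_subset_ball (by linarith)))⟩

end MetricLemmas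

section Main

variable {X : Type*} [MetricSpace X] [CompleteSpace X]
    [TopologicalSpace.SeparableSpace X] [MeasurableSpace X] [BorelSpace X]
    {μ : Measure X} [IsProbabilityMeasure μ]

/-- Main subsequence extraction lemma. -/
lemma closKF_subseq
    (hsupp : ∀ U : Set X, IsOpen U → U.Nonempty → 0 < μ U)
    (F : Set (X → ℝ)) (hF : ∀ f ∈ F, LipschitzWith 1 f)
    (g : ℕ → X → ℝ) (hg : ∀ n, g n ∈ closKF μ F)
    (ft : X → ℝ) (hft : LipschitzWith 1 ft)
    (c : ℝ≥0∞) (hc : c < 1) (hbd : ∀ n, eKyFan μ ft (g n) < c) :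
    ∃ φ : ℕ → ℕ, StrictMono φ ∧ ∃ H : X → ℝ, H ∈ closKF μ F ∧
      Tendsto (fun n => eKyFan μ (g (φ n)) H) atTop (𝓝 0) := by
  have hXne : Nonempty X := by
    by_contra hX
    rw [not_nonempty_iff] at hX
    have : μ univ = 0 := by rw [Set.univ_eq_empty_iff.mpr hX]; exact measure_empty
    rw [measure_univ] at this; exact one_ne_zero this
  obtain ⟨x₀⟩ := hXne
  haveI : Nonempty X := ⟨x₀⟩
  -- Lipschitz representatives
  have hreps : ∀ n, ∃ h : X → ℝ, LipschitzWith 1 h ∧ g n =ᵐ[μ] h :=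
    fun n => exists_lip_rep hsupp F hF (g n) (hg n)
  choose h hlip hae using hreps
  have hKF : ∀ n, eKyFan μ ft (h n) < c := by
    intro n; rw [← eKyFan_congr_right (hae n)]; exact hbd n
  -- an intermediate level c < c' < 1
  have hctop : c ≠ ⊤ := ne_top_of_lt hc
  set t := c.toReal with ht
  have htlt : t < 1 := by
    rw [ht]
    exact (ENNReal.toReal_lt_toReal hctop ENNReal.one_ne_top).mpr (by simpa using hc)
  have htnn : 0 ≤ t := ENNReal.toReal_nonneg
  set c' : ℝ≥0∞ := ENNReal.ofReal ((t+1)/2) with hc'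
  have hcc' : c < c' := by
    rw [hc', ht]
    conv_lhs => rw [← ENNReal.ofReal_toReal hctop]
    exact ENNReal.ofReal_lt_ofReal_iff (by linarith) |>.mpr (by linarith)
  have hc'1 : c' < 1 := by
    rw [hc', ← ENNReal.ofReal_one]
    exact ENNReal.ofReal_lt_ofReal_iff (by norm_num) |>.mpr (by linarith)
  have hmeas : ∀ n, μ {x | c' < edist (ft x) (h n x)} ≤ c' :=
    fun n => measure_le_of_eKyFan_lt (lt_trans (hKF n) hcc')
  -- a large ball
  obtain ⟨R, hR, hRc⟩ := exists_big_ball (μ := μ) x₀ c' hc'1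
  -- uniform bound at x₀
  have hbound : ∀ n, |h n x₀| ≤ |ft x₀| + 2*R + 1 := by
    intro n
    obtain ⟨x, hxB, hxd⟩ := exists_pt_near ft (h n) c' (hmeas n) (Metric.ball x₀ R) hRc
    have hdist1 : dist (ft x) (h n x) ≤ 1 := by
      have : edist (ft x) (h n x) ≤ 1 := le_trans hxd hc'1.le
      rw [edist_dist] at this
      exact (ENNReal.ofReal_le_one).mp this
    have hxx₀ : dist x x₀ < R := Metric.mem_ball.mp hxB
    have h1 : |h n x₀ - h n x| ≤ dist x₀ x := by
      have := (hlip n).dist_le_mul x₀ x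
      simpa [Real.dist_eq] using this
    have h2 : |ft x - ft x₀| ≤ dist x x₀ := by
      have := hft.dist_le_mul x x₀
      simpa [Real.dist_eq] using this
    have h3 : |h n x - ft x| ≤ 1 := by
      rw [Real.dist_eq] at hdist1
      rw [abs_sub_comm]; exact hdist1
    have habs : |h n x₀| ≤ |h n x₀ - h n x| + |h n x - ft x| + |ft x - ft x₀| + |ft x₀| := by
      have e : h n x₀ = (h n x₀ - h n x) + (h n x - ft x) + (ft x - ft x₀) + ft x₀ := by ring
      have k1 : |(h n x₀ - h n x) + (h n x - ft x) + (ft x - ft x₀)| ≤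
          |h n x₀ - h n x| + |h n x - ft x| + |ft x - ft x₀| := abs_add_three _ _ _
      conv_lhs => rw [e]
      exact (abs_add_le _ _).trans (add_le_add_left k1 _)
    have hdd : dist x₀ x = dist x x₀ := dist_comm _ _
    calc |h n x₀| ≤ |h n x₀ - h n x| + |h n x - ft x| + |ft x - ft x₀| + |ft x₀| := habs
      _ ≤ dist x₀ x + 1 + dist x x₀ + |ft x₀| := by gcongr
      _ ≤ R + 1 + R + |ft x₀| := by rw [hdd]; gcongr <;> linarith
      _ = |ft x₀| + 2*R + 1 := by ring
  -- Arzelà–Ascoli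
  obtain ⟨φ, hφ, H, hHlip, hHconv⟩ := arzela h hlip x₀ (|ft x₀| + 2*R + 1) hbound
  -- convergence in measure
  have hmeasconv : TendstoInMeasure μ (fun n => h (φ n)) atTop H :=
    tendstoInMeasure_of_tendsto_ae
      (fun n => ((hlip (φ n)).continuous).aestronglyMeasurable)
      (Eventually.of_forall hHconv)
  have hKFconv : Tendsto (fun n => eKyFan μ (h (φ n)) H) atTop (𝓝 0) :=
    tendsto_eKyFan_zero_of_tendstoInMeasure _ _ hmeasconv
  have hgH : ∀ n, eKyFan μ (g (φ n)) H = eKyFan μ (h (φ n)) H :=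
    fun n => eKyFan_congr_left (hae (φ n))
  have hgHconv : Tendsto (fun n => eKyFan μ (g (φ n)) H) atTop (𝓝 0) := by
    simpa only [hgH] using hKFconv
  refine ⟨φ, hφ, H, ?_, hgHconv⟩
  -- H belongs to the closure
  intro ε hε
  have hε2 : 0 < ε / 2 := ENNReal.div_pos hε.ne' ENNReal.ofNat_ne_top
  have hev : ∀ᶠ n in atTop, eKyFan μ (g (φ n)) H < ε / 2 := by
    have : ∀ᶠ y in 𝓝 (0 : ℝ≥0∞), y < ε / 2 := eventually_lt_nhds hε2
    exact hgHconv.eventually this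
  obtain ⟨n, hn⟩ := hev.exists
  obtain ⟨f', hf'F, hf'⟩ := hg (φ n) (ε / 2) hε2
  refine ⟨f', hf'F, ?_⟩
  calc eKyFan μ f' H ≤ eKyFan μ f' (g (φ n)) + eKyFan μ (g (φ n)) H := eKyFan_triangle _ _ _
    _ < ε := ennreal_half_add hf' hn

end Main

theorem closKF_ball_compact {X : Type*} [MetricSpace X] [CompleteSpace X]
    [TopologicalSpace.SeparableSpace X] [MeasurableSpace X] [BorelSpace X]
    (μ : Measure X) [IsProbabilityMeasure μ]
    (hsupp : ∀ U : Set X, IsOpen U → U.Nonempty → 0 < μ U)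
    (F : Set (X → ℝ)) (hF : ∀ f ∈ F, LipschitzWith 1 f)
    (f : X → ℝ) (hf : f ∈ closKF μ F) (r : ℝ) (hr : r ∈ Set.Ioo (0 : ℝ) 1) :
    -- sequential compactness of the closed Ky Fan ball in the closure
    (∀ g : ℕ → X → ℝ,
      (∀ n, g n ∈ closKF μ F ∧ eKyFan μ f (g n) ≤ ENNReal.ofReal r) →
      ∃ φ : ℕ → ℕ, StrictMono φ ∧ ∃ h : X → ℝ,
        h ∈ closKF μ F ∧ eKyFan μ f h ≤ ENNReal.ofReal r ∧
        Tendsto (fun n => eKyFan μ (g (φ n)) h) atTop (𝓝 0)) ∧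
    -- completeness of the closure with respect to the Ky Fan metric
    (∀ g : ℕ → X → ℝ, (∀ n, g n ∈ closKF μ F) →
      (∀ ε : ℝ≥0∞, 0 < ε → ∃ N : ℕ, ∀ m ≥ N, ∀ n ≥ N, eKyFan μ (g m) (g n) < ε) →
      ∃ h ∈ closKF μ F, Tendsto (fun n => eKyFan μ (g n) h) atTop (𝓝 0)) := by
  obtain ⟨hr0, hr1⟩ := hr
  constructor
  · -- sequential compactness
    intro g hg
    obtain ⟨ft, hftlip, hftae⟩ := exists_lip_rep hsupp F hF f hf
    set c : ℝ≥0∞ := ENNReal.ofReal ((r+1)/2) with hcdef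
    have hc1 : c < 1 := by
      rw [hcdef, ← ENNReal.ofReal_one]
      exact (ENNReal.ofReal_lt_ofReal_iff (by norm_num)).mpr (by linarith)
    have hrc : ENNReal.ofReal r < c := by
      rw [hcdef]
      exact (ENNReal.ofReal_lt_ofReal_iff (by linarith)).mpr (by linarith)
    have hbd : ∀ n, eKyFan μ ft (g n) < c := by
      intro n
      rw [← eKyFan_congr_left hftae]
      exact lt_of_le_of_lt (hg n).2 hrc
    obtain ⟨φ, hφ, H, hHmem, hHconv⟩ :=
      closKF_subseq hsupp F hF g (fun n => (hg n).1) ft hftlip c hc1 hbd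
    refine ⟨φ, hφ, H, hHmem, ?_, hHconv⟩
    -- eKyFan μ f H ≤ ofReal r
    refine ENNReal.le_of_forall_pos_le_add fun ε hε hfin => ?_
    have hεpos : (0:ℝ≥0∞) < ε := by exact_mod_cast hε
    have hev : ∀ᶠ n in atTop, eKyFan μ (g (φ n)) H ≤ ε :=
      ENNReal.tendsto_nhds_zero.mp hHconv ε hεpos
    obtain ⟨n, hn⟩ := hev.exists
    calc eKyFan μ f H ≤ eKyFan μ f (g (φ n)) + eKyFan μ (g (φ n)) H := eKyFan_triangle _ _ _
      _ ≤ ENNReal.ofReal r + ε := add_le_add (hg (φ n)).2 hn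
  · -- completeness
    intro g hg hcauchy
    obtain ⟨N, hN⟩ := hcauchy (1/2) (by norm_num)
    set g' : ℕ → X → ℝ := fun n => g (n + N) with hg'def
    have hg' : ∀ n, g' n ∈ closKF μ F := fun n => hg _
    obtain ⟨ft, hftlip, hftae⟩ := exists_lip_rep hsupp F hF (g N) (hg N)
    have hbd : ∀ n, eKyFan μ ft (g' n) < 1/2 := by
      intro n
      rw [← eKyFan_congr_left hftae]
      exact hN N le_rfl (n + N) (Nat.le_add_left _ _)
    have hhalf : (1/2 : ℝ≥0∞) < 1 := by
      rw [one_div]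
      exact ENNReal.inv_lt_one.mpr (by norm_num)
    obtain ⟨φ, hφ, H, hHmem, hHconv⟩ :=
      closKF_subseq hsupp F hF g' hg' ft hftlip (1/2) hhalf hbd
    refine ⟨H, hHmem, ?_⟩
    rw [ENNReal.tendsto_nhds_zero]
    intro ε hε
    have hε2 : 0 < ε / 2 := ENNReal.div_pos hε.ne' ENNReal.ofNat_ne_top
    obtain ⟨M, hM⟩ := hcauchy (ε/2) hε2
    have hev : ∀ᶠ n in atTop, eKyFan μ (g' (φ n)) H < ε / 2 :=
      hHconv.eventually (eventually_lt_nhds hε2)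
    obtain ⟨k, hk1, hk2⟩ := (hev.and (eventually_ge_atTop M)).exists
    have hφkM : M ≤ φ k + N := le_trans hk2 (le_trans (hφ.le_apply) (Nat.le_add_right _ _))
    rw [eventually_atTop]
    refine ⟨M, fun n hn => ?_⟩
    have h1 : eKyFan μ (g n) (g (φ k + N)) < ε / 2 := hM n hn _ hφkM
    calc eKyFan μ (g n) H ≤ eKyFan μ (g n) (g (φ k + N)) + eKyFan μ (g (φ k + N)) H :=
          eKyFan_triangle _ _ _
      _ ≤ ε / 2 + ε / 2 := add_le_add h1.le hk1.le
      _ = ε := ENNReal.add_halves ε
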